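/- Consider the ODE ẏ(t) = T(y(t)) − r*·e − y(t) on ℝ^{S×A}, where T is the Bellman optimality operator of a finite communicating MDP. If ȳ is an equilibrium point of this ODE (i.e., T(ȳ) = ȳ + r*·e), then along every solution y : [0,∞) → ℝ^{S×A} the function t ↦ ‖y(t) − ȳ‖_∞ is nonincreasing; moreover, every solution y(t) converges as t → ∞ to some equilibrium point y* of the ODE, where y* may depend on the initial condition y(0). -/

import Mathlib

open Filter Topology Matrix

/-- A finite Markov decision process with finite state set `S`, finite action set `A`,
finite reward set `R` (embedded in `ℝ` via `rval`), and transition dynamics `p`. -/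
structure MDP (S A R : Type*) [Fintype S] [Fintype A] [Fintype R] where
  /-- `p s a s' r` is the probability of transitioning to `s'` with reward `r`
  when taking action `a` in state `s`. -/
  p : S → A → S → R → ℝ
  /-- The real value of each abstract reward. -/
  rval : R → ℝ
  p_nonneg : ∀ s a s' r, 0 ≤ p s a s' r
  p_sum_one : ∀ s a, ∑ s' : S, ∑ r : R, p s a s' r = 1

variable {S A R : Type*} [Fintype S] [Fintype A] [Fintype R] [DecidableEq S]

/-- A stationary Markov policy: a probability distribution over actions for each state. -/
def IsPolicy (π : S → A → ℝ) : Prop :=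
  (∀ s a, 0 ≤ π s a) ∧ ∀ s, ∑ a : A, π s a = 1

/-- Transition matrix of the Markov chain induced by policy `π`. -/
noncomputable def MDP.Pmat (M : MDP S A R) (π : S → A → ℝ) : Matrix S S ℝ :=
  Matrix.of fun s s' => ∑ a : A, ∑ r : R, π s a * M.p s a s' r

/-- Expected one-step reward under policy `π`. -/
noncomputable def MDP.rPi (M : MDP S A R) (π : S → A → ℝ) : S → ℝ :=
  fun s => ∑ a : A, ∑ s' : S, ∑ r : R, π s a * M.p s a s' r * M.rval r

/-- The reward rate `r(π, s)`: the Cesàro limit of expected rewards starting from `s`,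
where `E[R_t | S_0 = s] = (P_π^(t-1) r_π)(s)`. -/
noncomputable def MDP.rewardRate (M : MDP S A R) (π : S → A → ℝ) (s : S) : ℝ :=
  limUnder atTop (fun n : ℕ =>
    (1 / (n : ℝ)) * ∑ t ∈ Finset.range n, ((M.Pmat π ^ t) *ᵥ M.rPi π) s)

/-- The MDP is communicating: every state is reachable from every other state with
positive probability, in finitely many steps, under some policy. -/
def MDP.Communicating (M : MDP S A R) : Prop :=
  ∀ s s' : S, ∃ π : S → A → ℝ, IsPolicy π ∧ ∃ n : ℕ, 0 < n ∧ 0 < (M.Pmat π ^ n) s s'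

/-- The optimal reward rate `r* = sup_{π, s} r(π, s)`. -/
noncomputable def MDP.rStar (M : MDP S A R) : ℝ :=
  sSup {x : ℝ | ∃ π : S → A → ℝ, ∃ s : S, IsPolicy π ∧ x = M.rewardRate π s}

/-- The Bellman optimality operator `T(Q)(s,a) = Σ_{s',r} p(s',r|s,a) (r + max_{a'} Q(s',a'))`. -/
noncomputable def MDP.T [Nonempty A] (M : MDP S A R) (Q : S × A → ℝ) : S × A → ℝ :=
  fun sa => ∑ s' : S, ∑ r : R, M.p sa.1 sa.2 s' r * (M.rval r + ⨆ a' : A, Q (s', a'))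

/-- `Q` solves the average-reward Bellman optimality equation with offset `rbar`. -/
def MDP.BellmanOpt [Nonempty A] (M : MDP S A R) (Q : S × A → ℝ) (rbar : ℝ) : Prop :=
  ∀ s a, Q (s, a) = ∑ s' : S, ∑ r : R,
    M.p s a s' r * (M.rval r - rbar + ⨆ a' : A, Q (s', a'))

set_option linter.unusedSectionVars false

section Aux

variable [Nonempty A] [Nonempty S]

noncomputable def vecMax (x : S × A → ℝ) : ℝ := ⨆ i, x i

lemma le_vecMax (x : S × A → ℝ) (i : S × A) : x i ≤ vecMax x :=
  le_ciSup (Set.Finite.bddAbove (Set.finite_range x)) i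

lemma vecMax_le {x : S × A → ℝ} {c : ℝ} (h : ∀ i, x i ≤ c) : vecMax x ≤ c := ciSup_le h

lemma exists_vecMax (x : S × A → ℝ) : ∃ i, vecMax x = x i := by
  obtain ⟨i, hi⟩ := Finite.exists_max x
  exact ⟨i, le_antisymm (vecMax_le hi) (le_vecMax x i)⟩

lemma vecMax_le_norm (x : S × A → ℝ) : vecMax x ≤ ‖x‖ :=
  vecMax_le fun i => (le_abs_self _).trans (by simpa [Real.norm_eq_abs] using norm_le_pi_norm x i)

lemma norm_le_of_vecMax {x : S × A → ℝ} {c : ℝ} (h1 : vecMax x ≤ c) (h2 : vecMax (-x) ≤ c) :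
    ‖x‖ ≤ c := by
  have i0 := Classical.arbitrary (S × A)
  have hc : 0 ≤ c := by
    have ha := (le_vecMax x i0).trans h1
    have hb := (le_vecMax (-x) i0).trans h2
    simp only [Pi.neg_apply] at hb
    linarith
  refine (pi_norm_le_iff_of_nonneg hc).2 fun i => ?_
  rw [Real.norm_eq_abs, abs_le]
  constructor
  · have := (le_vecMax (-x) i).trans h2
    simp only [Pi.neg_apply] at this
    linarith
  · exact (le_vecMax x i).trans h1

lemma ciSup_sub_ciSup_le (x x' : S × A → ℝ) (s' : S) :
    (⨆ a : A, x (s', a)) - (⨆ a : A, x' (s', a)) ≤ vecMax (x - x') := by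
  obtain ⟨a0, ha0⟩ := Finite.exists_max (fun a : A => x (s', a))
  have h1 : (⨆ a : A, x (s', a)) ≤ x (s', a0) := ciSup_le ha0
  have h2 : x' (s', a0) ≤ ⨆ a : A, x' (s', a) :=
    le_ciSup (f := fun a : A => x' (s', a)) (Set.Finite.bddAbove (Set.finite_range _)) a0
  have h3 := le_vecMax (x - x') (s', a0)
  simp only [Pi.sub_apply] at h3
  linarith

lemma T_sub_le (M : MDP S A R) (x x' : S × A → ℝ) (i : S × A) :
    M.T x i - M.T x' i ≤ vecMax (x - x') := by
  have hstep : M.T x i - M.T x' i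
      = ∑ s' : S, ∑ r : R, M.p i.1 i.2 s' r * ((⨆ a' : A, x (s', a')) - ⨆ a' : A, x' (s', a')) := by
    unfold MDP.T
    rw [← Finset.sum_sub_distrib]
    refine Finset.sum_congr rfl fun s' _ => ?_
    rw [← Finset.sum_sub_distrib]
    refine Finset.sum_congr rfl fun r _ => ?_
    ring
  rw [hstep]
  calc ∑ s' : S, ∑ r : R, M.p i.1 i.2 s' r * ((⨆ a' : A, x (s', a')) - ⨆ a' : A, x' (s', a'))
      ≤ ∑ s' : S, ∑ r : R, M.p i.1 i.2 s' r * vecMax (x - x') := by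
        refine Finset.sum_le_sum fun s' _ => Finset.sum_le_sum fun r _ => ?_
        exact mul_le_mul_of_nonneg_left (ciSup_sub_ciSup_le x x' s') (M.p_nonneg _ _ _ _)
    _ = vecMax (x - x') := by
        simp only [← Finset.sum_mul]
        rw [M.p_sum_one i.1 i.2, one_mul]

lemma T_lip (M : MDP S A R) (x x' : S × A → ℝ) : ‖M.T x - M.T x'‖ ≤ ‖x - x'‖ := by
  refine norm_le_of_vecMax (vecMax_le fun i => ?_) (vecMax_le fun i => ?_)
  · have := (T_sub_le M x x' i).trans (vecMax_le_norm _)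
    simpa [Pi.sub_apply] using this
  · have := (T_sub_le M x' x i).trans (vecMax_le_norm _)
    rw [norm_sub_rev] at this
    simpa [Pi.sub_apply] using this

/-! ### The ODE -/

noncomputable def vfield (M : MDP S A R) (c : ℝ) (x : S × A → ℝ) : S × A → ℝ :=
  M.T x - c • (fun _ => (1 : ℝ)) - x

def IsSol (M : MDP S A R) (c : ℝ) (v : ℝ → S × A → ℝ) : Prop :=
  ∀ t ∈ Set.Ici (0 : ℝ), HasDerivWithinAt v (vfield M c (v t)) (Set.Ici 0) t

lemma vfield_sub (M : MDP S A R) (c : ℝ) (x x' : S × A → ℝ) :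
    vfield M c x - vfield M c x' = (M.T x - M.T x') - (x - x') := by
  unfold vfield; abel

lemma IsSol.shift {M : MDP S A R} {c : ℝ} {v : ℝ → S × A → ℝ} (hv : IsSol M c v) {h : ℝ}
    (hh : 0 ≤ h) : IsSol M c (fun t => v (t + h)) := by
  intro t ht
  simp only [Set.mem_Ici] at ht
  have h1 := hv (t + h) (by simp only [Set.mem_Ici]; linarith)
  have h2 : HasDerivWithinAt (fun s : ℝ => s + h) 1 (Set.Ici 0) t := by
    simpa using (hasDerivWithinAt_id t (Set.Ici (0:ℝ))).add_const h
  have h3 := HasDerivWithinAt.scomp (x := t) h1 h2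
    (fun s hs => by simp only [Set.mem_Ici] at *; linarith)
  exact h3.congr_deriv (one_smul _ _)

lemma isSol_const {M : MDP S A R} {c : ℝ} {q : S × A → ℝ}
    (hq : M.T q = q + c • (fun _ => (1 : ℝ))) : IsSol M c (fun _ => q) := by
  intro t ht
  have h0 : vfield M c q = 0 := by rw [vfield, hq]; abel
  have := hasDerivWithinAt_const t (Set.Ici (0:ℝ)) q
  rw [← h0] at this
  exact this

lemma expSmul_deriv {M : MDP S A R} {c : ℝ} {v w : ℝ → S × A → ℝ} (hv : IsSol M c v)
    (hw : IsSol M c w) (k : S × A → ℝ) {t : ℝ} (ht : t ∈ Set.Ici (0 : ℝ)) :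
    HasDerivWithinAt (fun t => Real.exp t • (v t - w t + k))
      (Real.exp t • (M.T (v t) - M.T (w t) + k)) (Set.Ici 0) t := by
  have h1 : HasDerivWithinAt (fun t => v t - w t + k)
      (vfield M c (v t) - vfield M c (w t)) (Set.Ici 0) t :=
    ((hv t ht).sub (hw t ht)).add_const k
  have h2 : HasDerivWithinAt Real.exp (Real.exp t) (Set.Ici 0) t :=
    (Real.hasDerivAt_exp t).hasDerivWithinAt
  have h3 := h2.smul h1
  refine h3.congr_deriv ?_
  rw [vfield_sub]
  module

lemma gron {f f' : ℝ → S × A → ℝ} {t₁ t₂ : ℝ} (h1 : 0 ≤ t₁) (h12 : t₁ ≤ t₂)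
    (hd : ∀ t ∈ Set.Icc t₁ t₂, HasDerivWithinAt f (f' t) (Set.Ici 0) t)
    (hb : ∀ t ∈ Set.Icc t₁ t₂, ‖f' t‖ ≤ ‖f t‖) :
    ‖f t₂‖ ≤ ‖f t₁‖ * Real.exp (t₂ - t₁) := by
  have key := norm_le_gronwallBound_of_norm_deriv_right_le (f := f) (f' := f')
    (δ := ‖f t₁‖) (K := 1) (ε := 0) (a := t₁) (b := t₂)
    (fun t htt => ((hd t htt).continuousWithinAt).mono
      (fun x hx => Set.mem_Ici.2 (h1.trans hx.1)))
    (fun t htt => (hd t (Set.Ico_subset_Icc_self htt)).mono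
      (Set.Ici_subset_Ici.2 (h1.trans htt.1)))
    le_rfl
    (fun t htt => by
      rw [one_mul, add_zero]; exact hb t (Set.Ico_subset_Icc_self htt))
  have h2 := key t₂ (Set.mem_Icc.2 ⟨h12, le_rfl⟩)
  rwa [gronwallBound_ε0, one_mul] at h2

lemma exp_cancel {a b t₁ t₂ : ℝ} (h : Real.exp t₂ * a ≤ Real.exp t₁ * b * Real.exp (t₂ - t₁)) :
    a ≤ b := by
  have he : Real.exp t₁ * Real.exp (t₂ - t₁) = Real.exp t₂ := by
    rw [← Real.exp_add]; ring_nf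
  have hp := Real.exp_pos t₂
  have h3 : Real.exp t₁ * b * Real.exp (t₂ - t₁) = Real.exp t₂ * b := by rw [← he]; ring
  rw [h3] at h
  exact le_of_mul_le_mul_left h hp

lemma normDist_antitone {M : MDP S A R} {c : ℝ} {v w : ℝ → S × A → ℝ} (hv : IsSol M c v)
    (hw : IsSol M c w) : AntitoneOn (fun t => ‖v t - w t‖) (Set.Ici 0) := by
  intro t₁ ht₁ t₂ ht₂ h12
  simp only [Set.mem_Ici] at ht₁ ht₂
  have key := gron (f := fun t => Real.exp t • (v t - w t + 0))
    (f' := fun t => Real.exp t • (M.T (v t) - M.T (w t) + 0)) ht₁ h12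
    (fun t htt => expSmul_deriv hv hw 0 (Set.mem_Ici.2 (ht₁.trans htt.1)))
    (fun t htt => by
      rw [norm_smul, norm_smul, Real.norm_eq_abs, Real.abs_exp, add_zero, add_zero]
      exact mul_le_mul_of_nonneg_left (T_lip M (v t) (w t)) (Real.exp_pos t).le)
  simp only [add_zero, norm_smul, Real.norm_eq_abs, Real.abs_exp] at key
  exact exp_cancel key
lemma norm_add_const_le {z : S × A → ℝ} {c R0 : ℝ} (hub : ∀ i, z i ≤ c) (hlb : ∀ i, -R0 ≤ z i) :
    ‖z + (fun _ => R0)‖ ≤ c + R0 := by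
  have i0 := Classical.arbitrary (S × A)
  have h0 : 0 ≤ c + R0 := by linarith [hub i0, hlb i0]
  refine (pi_norm_le_iff_of_nonneg h0).2 fun i => ?_
  show |z i + R0| ≤ c + R0
  rw [abs_le]
  constructor
  · linarith [hlb i]
  · linarith [hub i]

lemma le_norm_add_const (z : S × A → ℝ) (R0 : ℝ) : vecMax z + R0 ≤ ‖z + (fun _ => R0)‖ := by
  obtain ⟨im, him⟩ := exists_vecMax z
  have h1 : vecMax z + R0 = (z + (fun _ => R0) : S × A → ℝ) im := by rw [him]; simp
  rw [h1]
  exact (le_abs_self _).trans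
    (norm_le_pi_norm (z + (fun _ => R0)) im)

lemma vecMaxDist_antitone {M : MDP S A R} {c : ℝ} {v w : ℝ → S × A → ℝ} (hv : IsSol M c v)
    (hw : IsSol M c w) : AntitoneOn (fun t => vecMax (v t - w t)) (Set.Ici 0) := by
  intro t₁ ht₁' t₂ ht₂' h12
  simp only [Set.mem_Ici] at ht₁' ht₂'
  set R0 := ‖v t₁ - w t₁‖ with hR0
  set k : S × A → ℝ := fun _ => R0 with hk
  have hzb : ∀ t ∈ Set.Icc t₁ t₂, ‖v t - w t‖ ≤ R0 := fun t htt =>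
    normDist_antitone hv hw (Set.mem_Ici.2 ht₁') (Set.mem_Ici.2 (ht₁'.trans htt.1)) htt.1
  have key := gron (f := fun t => Real.exp t • (v t - w t + k))
    (f' := fun t => Real.exp t • (M.T (v t) - M.T (w t) + k)) ht₁' h12
    (fun t htt => expSmul_deriv hv hw k (Set.mem_Ici.2 (ht₁'.trans htt.1)))
    (fun t htt => by
      rw [norm_smul, norm_smul, Real.norm_eq_abs, Real.abs_exp]
      refine mul_le_mul_of_nonneg_left ?_ (Real.exp_pos t).le
      have hzR : ∀ i, |(v t - w t) i| ≤ R0 := fun i =>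
        (by simpa [Real.norm_eq_abs] using norm_le_pi_norm (v t - w t) i :
          |(v t - w t) i| ≤ ‖v t - w t‖).trans (hzb t htt)
      have hGub : ∀ i, (M.T (v t) - M.T (w t)) i ≤ vecMax (v t - w t) := fun i => by
        simpa [Pi.sub_apply] using T_sub_le M (v t) (w t) i
      have hGlb : ∀ i, -R0 ≤ (M.T (v t) - M.T (w t)) i := fun i => by
        have h5 := (T_sub_le M (w t) (v t) i).trans (vecMax_le_norm _)
        have h6 : ‖w t - v t‖ ≤ R0 := by rw [norm_sub_rev]; exact hzb t htt
        simp only [Pi.sub_apply] at h5 ⊢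
        linarith
      refine le_trans (norm_add_const_le hGub hGlb) ?_
      refine le_trans ?_ (le_norm_add_const (v t - w t) R0)
      have : ∀ i, -R0 ≤ (v t - w t) i := fun i => (abs_le.1 (hzR i)).1
      have i0 := Classical.arbitrary (S × A)
      linarith [le_vecMax (v t - w t) i0, this i0])
  simp only [norm_smul, Real.norm_eq_abs, Real.abs_exp] at key
  have key2 : ‖v t₂ - w t₂ + k‖ ≤ ‖v t₁ - w t₁ + k‖ := exp_cancel key
  have h7 : vecMax (v t₂ - w t₂) + R0 ≤ ‖v t₂ - w t₂ + k‖ := le_norm_add_const _ _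
  have h8 : ‖v t₁ - w t₁ + k‖ ≤ vecMax (v t₁ - w t₁) + R0 := by
    refine norm_add_const_le (fun i => le_vecMax _ i) (fun i => ?_)
    have := (by simpa [Real.norm_eq_abs] using norm_le_pi_norm (v t₁ - w t₁) i : |(v t₁ - w t₁) i| ≤ ‖v t₁ - w t₁‖)
    have := (abs_le.1 this).1
    linarith
  show vecMax (v t₂ - w t₂) ≤ vecMax (v t₁ - w t₁)
  linarith
lemma real_growth {f : ℝ → ℝ} {f' : ℝ → ℝ} {t δ a : ℝ} (hδ : 0 < δ)
    (hc : ContinuousOn f (Set.Icc t (t + δ)))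
    (hd : ∀ x ∈ Set.Ioo t (t + δ), HasDerivAt f (f' x) x)
    (hlb : ∀ x ∈ Set.Ioo t (t + δ), a ≤ f' x) : a * δ ≤ f (t + δ) - f t := by
  have hmono : MonotoneOn (fun s => f s - a * s) (Set.Icc t (t + δ)) := by
    apply monotoneOn_of_deriv_nonneg (convex_Icc _ _)
    · exact hc.sub ((continuous_const.mul continuous_id).continuousOn)
    · rw [interior_Icc]
      intro x hx
      exact ((hd x hx).sub ((hasDerivAt_id x).const_mul a)).differentiableAt.differentiableWithinAt
    · rw [interior_Icc]
      intro x hx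
      have hda : HasDerivAt (fun s => f s - a * s) (f' x - a) x := by
        have := (hd x hx).sub ((hasDerivAt_id x).const_mul a)
        exact this.congr_deriv (by ring)
      rw [hda.deriv]
      linarith [hlb x hx]
  have h1 := hmono (Set.mem_Icc.2 ⟨le_refl t, by linarith⟩)
    (Set.mem_Icc.2 ⟨by linarith, le_refl _⟩) (by linarith)
  simp only at h1
  linarith

lemma real_decay {f : ℝ → ℝ} {f' : ℝ → ℝ} {t δ a : ℝ} (hδ : 0 < δ)
    (hc : ContinuousOn f (Set.Icc t (t + δ)))
    (hd : ∀ x ∈ Set.Ioo t (t + δ), HasDerivAt f (f' x) x)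
    (hub : ∀ x ∈ Set.Ioo t (t + δ), f' x ≤ a) : f (t + δ) - f t ≤ a * δ := by
  have hanti : AntitoneOn (fun s => f s - a * s) (Set.Icc t (t + δ)) := by
    apply antitoneOn_of_deriv_nonpos (convex_Icc _ _)
    · exact hc.sub ((continuous_const.mul continuous_id).continuousOn)
    · rw [interior_Icc]
      intro x hx
      exact ((hd x hx).sub ((hasDerivAt_id x).const_mul a)).differentiableAt.differentiableWithinAt
    · rw [interior_Icc]
      intro x hx
      have hda : HasDerivAt (fun s => f s - a * s) (f' x - a) x := by
        have := (hd x hx).sub ((hasDerivAt_id x).const_mul a)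
        exact this.congr_deriv (by ring)
      rw [hda.deriv]
      linarith [hub x hx]
  have h1 := hanti (Set.mem_Icc.2 ⟨le_refl t, by linarith⟩)
    (Set.mem_Icc.2 ⟨by linarith, le_refl _⟩) (by linarith)
  simp only at h1
  linarith

lemma sol_cont {M : MDP S A R} {c : ℝ} {v : ℝ → S × A → ℝ} (hv : IsSol M c v) :
    ContinuousOn v (Set.Ici 0) := fun t ht => (hv t ht).continuousWithinAt

lemma sol_coord_deriv {M : MDP S A R} {c : ℝ} {v w : ℝ → S × A → ℝ} (hv : IsSol M c v)
    (hw : IsSol M c w) {x : ℝ} (hx : 0 < x) (i : S × A) :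
    HasDerivAt (fun s => (v s - w s) i)
      ((M.T (v x) - M.T (w x)) i - (v x - w x) i) x := by
  have h1 : HasDerivAt (fun s => v s - w s) (vfield M c (v x) - vfield M c (w x)) x :=
    (((hv x hx.le).sub (hw x hx.le)).hasDerivAt (Ici_mem_nhds hx))
  have h2 := hasDerivAt_pi.1 h1 i
  have h3 : (vfield M c (v x) - vfield M c (w x)) i
      = (M.T (v x) - M.T (w x)) i - (v x - w x) i := by
    rw [vfield_sub]; simp [Pi.sub_apply]
  rw [h3] at h2
  exact h2

lemma psi_antitone {M : MDP S A R} {c : ℝ} {v w : ℝ → S × A → ℝ} (hv : IsSol M c v)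
    (hw : IsSol M c w) {t₀ : ℝ} (ht₀ : 0 ≤ t₀) (i : S × A) {c₀ : ℝ}
    (hub : ∀ t ∈ Set.Ici t₀, (M.T (v t) - M.T (w t)) i ≤ c₀) :
    AntitoneOn (fun t => Real.exp t * ((v t - w t) i - c₀)) (Set.Ici t₀) := by
  have hd : ∀ x ∈ Set.Ioi t₀, HasDerivAt (fun t => Real.exp t * ((v t - w t) i - c₀))
      (Real.exp x * ((M.T (v x) - M.T (w x)) i - c₀)) x := by
    intro x hx
    have hx0 : 0 < x := lt_of_le_of_lt ht₀ hx
    have h1 := (sol_coord_deriv hv hw hx0 i).sub_const c₀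
    have h2 := (Real.hasDerivAt_exp x).mul h1
    exact h2.congr_deriv (by ring)
  apply antitoneOn_of_deriv_nonpos (convex_Ici t₀)
  · apply ContinuousOn.mul Real.continuous_exp.continuousOn
    apply ContinuousOn.sub _ continuousOn_const
    intro t ht
    have hcw : ContinuousWithinAt (fun s => v s - w s) (Set.Ici 0) t :=
      ((hv t (ht₀.trans ht)).sub (hw t (ht₀.trans ht))).continuousWithinAt
    exact ((continuous_apply i).continuousAt.comp_continuousWithinAt hcw).mono
      (Set.Ici_subset_Ici.2 ht₀)
  · rw [interior_Ici]
    intro x hx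
    exact (hd x hx).differentiableAt.differentiableWithinAt
  · rw [interior_Ici]
    intro x hx
    rw [(hd x hx).deriv]
    have h4 := hub x (Set.mem_Ici.2 (le_of_lt hx))
    have h5 : (M.T (v x) - M.T (w x)) i - c₀ ≤ 0 := by linarith
    exact mul_nonpos_of_nonneg_of_nonpos (Real.exp_pos x).le h5
lemma exists_vecMax_small {M : MDP S A R} {c : ℝ} {v w g : ℝ → S × A → ℝ}
    (hv : IsSol M c v) (hw : IsSol M c w) {h B1 : ℝ} (hh : 0 ≤ h)
    (hgb : ∀ t ∈ Set.Ici (0:ℝ), ‖g t‖ ≤ B1)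
    (htel : ∀ t ∈ Set.Ici (0:ℝ), ∀ N : ℕ,
      ∑ j ∈ Finset.range N, (v (t + (j:ℝ) * h) - w (t + (j:ℝ) * h)) = g (t + (N:ℝ) * h) - g t)
    {ε : ℝ} (hε : 0 < ε) : ∃ T ∈ Set.Ici (0:ℝ), vecMax (v T - w T) ≤ ε := by
  by_contra hcon
  push_neg at hcon
  have hcanti : AntitoneOn (fun t => vecMax (v t - w t)) (Set.Ici 0) := vecMaxDist_antitone hv hw
  set cf : ℝ → ℝ := fun t => vecMax (v t - w t) with hcf
  have hne : ((cf '' Set.Ici 0)).Nonempty := ⟨cf 0, ⟨0, Set.self_mem_Ici, rfl⟩⟩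
  have hlb : ∀ x ∈ cf '' Set.Ici 0, ε ≤ x := by
    rintro x ⟨t, ht, rfl⟩
    exact (hcon t ht).le
  set α := sInf (cf '' Set.Ici 0) with hα
  have hαε : ε ≤ α := le_csInf hne hlb
  have hbdd : BddBelow (cf '' Set.Ici 0) := ⟨ε, hlb⟩
  have hcα : ∀ t, 0 ≤ t → α ≤ cf t := fun t ht => csInf_le hbdd ⟨t, ht, rfl⟩
  have hB1 : 0 ≤ B1 := (norm_nonneg _).trans (hgb 0 Set.self_mem_Ici)
  obtain ⟨N, hN⟩ := exists_nat_gt ((4 * B1 + 1) / ε)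
  have hNε : 4 * B1 < (N:ℝ) * ε := by
    rw [div_lt_iff₀ hε] at hN
    nlinarith
  set Tb : ℝ := (N:ℝ) * h with hTbdef
  have hTb0 : 0 ≤ Tb := mul_nonneg (Nat.cast_nonneg N) hh
  set δ := ε / 2 * Real.exp (-Tb) with hδdef
  have hδ0 : 0 < δ := by positivity
  have hexδ : Real.exp Tb * δ = ε / 2 := by
    rw [hδdef]
    have h1 : Real.exp Tb * Real.exp (-Tb) = 1 := by
      rw [← Real.exp_add, add_neg_cancel, Real.exp_zero]
    nlinarith [h1]
  obtain ⟨x0, hx0mem, hx0lt⟩ := exists_lt_of_csInf_lt hne (lt_add_of_pos_right α hδ0)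
  obtain ⟨t₀, ht₀, rfl⟩ := hx0mem
  simp only [Set.mem_Ici] at ht₀
  set s1 := t₀ + (N:ℝ) * h with hs1def
  have hs10 : 0 ≤ s1 := by rw [hs1def]; positivity
  obtain ⟨im, him⟩ := exists_vecMax (v s1 - w s1)
  have hub : ∀ t ∈ Set.Ici t₀, (M.T (v t) - M.T (w t)) im ≤ cf t₀ := by
    intro t ht
    simp only [Set.mem_Ici] at ht
    have h1 : (M.T (v t) - M.T (w t)) im ≤ cf t := by
      simpa [Pi.sub_apply] using T_sub_le M (v t) (w t) im
    have h2 : cf t ≤ cf t₀ := hcanti (Set.mem_Ici.2 ht₀) (Set.mem_Ici.2 (ht₀.trans ht)) ht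
    linarith
  have hanti := psi_antitone hv hw ht₀ im hub
  have hstep : ∀ j ∈ Finset.range N, ε / 2 ≤ (v (t₀ + (j:ℝ) * h) - w (t₀ + (j:ℝ) * h)) im := by
    intro j hj
    have hjN : (j : ℝ) ≤ (N:ℝ) := Nat.cast_le.2 (Finset.mem_range.1 hj).le
    set σ := t₀ + (j:ℝ) * h with hσdef
    have hσt₀ : t₀ ≤ σ := le_add_of_nonneg_right (mul_nonneg (Nat.cast_nonneg j) hh)
    have hσs : σ ≤ s1 := by
      rw [hσdef, hs1def]
      have := mul_le_mul_of_nonneg_right hjN hh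
      linarith
    have e1 := hanti (Set.mem_Ici.2 hσt₀) (Set.mem_Ici.2 (hσt₀.trans hσs)) hσs
    simp only at e1
    have hcfs1 : cf s1 = (v s1 - w s1) im := by rw [hcf]; exact him
    have e2 : α - cf t₀ ≤ (v s1 - w s1) im - cf t₀ := by
      have h3 := hcα s1 hs10
      rw [hcfs1] at h3
      linarith
    have e3 : Real.exp s1 * (α - cf t₀) ≤ Real.exp s1 * ((v s1 - w s1) im - cf t₀) :=
      mul_le_mul_of_nonneg_left e2 (Real.exp_pos s1).le
    have e4 : Real.exp s1 * (-δ) ≤ Real.exp s1 * (α - cf t₀) :=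
      mul_le_mul_of_nonneg_left (by linarith) (Real.exp_pos s1).le
    have e5 : Real.exp σ * (-(Real.exp Tb * δ)) ≤ Real.exp s1 * (-δ) := by
      have h6 : Real.exp s1 ≤ Real.exp σ * Real.exp Tb := by
        rw [← Real.exp_add]
        apply Real.exp_le_exp.2
        rw [hs1def, hσdef, hTbdef]
        have := mul_nonneg (Nat.cast_nonneg j) hh
        linarith
      nlinarith [hδ0.le]
    have e6 : Real.exp σ * (-(Real.exp Tb * δ)) ≤ Real.exp σ * ((v σ - w σ) im - cf t₀) := by
      linarith
    have e7 : -(Real.exp Tb * δ) ≤ (v σ - w σ) im - cf t₀ :=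
      le_of_mul_le_mul_left e6 (Real.exp_pos σ)
    have e8 : α ≤ cf t₀ := hcα t₀ ht₀
    rw [hexδ] at e7
    linarith
  have hsum := htel t₀ (Set.mem_Ici.2 ht₀) N
  have hsum' := congrFun hsum im
  simp only [Finset.sum_apply] at hsum'
  have hlow : (N : ℝ) * (ε / 2) ≤
      ∑ j ∈ Finset.range N, (v (t₀ + (j:ℝ) * h) - w (t₀ + (j:ℝ) * h)) im := by
    have h11 := Finset.card_nsmul_le_sum (Finset.range N)
      (fun j : ℕ => (v (t₀ + (j:ℝ) * h) - w (t₀ + (j:ℝ) * h)) im) (ε/2) hstep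
    simpa [Finset.card_range, nsmul_eq_mul] using h11
  have hup : (g (t₀ + (N:ℝ) * h) - g t₀) im ≤ 2 * B1 := by
    have h9 : |(g (t₀ + (N:ℝ) * h) - g t₀) im| ≤ ‖g (t₀ + (N:ℝ) * h) - g t₀‖ := by
      simpa [Real.norm_eq_abs] using norm_le_pi_norm (g (t₀ + (N:ℝ) * h) - g t₀) im
    have h10 : ‖g (t₀ + (N:ℝ) * h) - g t₀‖ ≤ B1 + B1 :=
      (norm_sub_le _ _).trans (add_le_add (hgb _ hs10) (hgb _ (Set.mem_Ici.2 ht₀)))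
    calc (g (t₀ + (N:ℝ) * h) - g t₀) im ≤ |(g (t₀ + (N:ℝ) * h) - g t₀) im| := le_abs_self _
      _ ≤ B1 + B1 := h9.trans h10
      _ = 2 * B1 := by ring
  rw [hsum'] at hlow
  nlinarith
lemma norm_shift_small {M : MDP S A R} {c : ℝ} {u : ℝ → S × A → ℝ} (hu : IsSol M c u)
    {B1 : ℝ} (hub : ∀ t ∈ Set.Ici (0:ℝ), ‖u t‖ ≤ B1) {h : ℝ} (hh : 0 ≤ h)
    {ε : ℝ} (hε : 0 < ε) :
    ∃ T ∈ Set.Ici (0:ℝ), ∀ t, T ≤ t → ‖u (t + h) - u t‖ ≤ ε := by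
  have hv1 : IsSol M c (fun t => u (t + h)) := hu.shift hh
  have htel1 : ∀ t ∈ Set.Ici (0:ℝ), ∀ N : ℕ,
      ∑ j ∈ Finset.range N, ((fun s => u (s + h)) (t + (j:ℝ) * h) - u (t + (j:ℝ) * h))
        = u (t + (N:ℝ) * h) - u t := by
    intro t _ N
    calc ∑ j ∈ Finset.range N, ((fun s => u (s + h)) (t + (j:ℝ) * h) - u (t + (j:ℝ) * h))
        = ∑ j ∈ Finset.range N,
            (u (t + ((j+1 : ℕ):ℝ) * h) - u (t + ((j:ℕ):ℝ) * h)) := by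
          refine Finset.sum_congr rfl fun j _ => ?_
          have e : t + (j:ℝ) * h + h = t + ((j+1 : ℕ):ℝ) * h := by push_cast; ring
          show u (t + (j:ℝ) * h + h) - u (t + (j:ℝ) * h) = _
          rw [e]
      _ = u (t + ((N:ℕ):ℝ) * h) - u (t + ((0:ℕ):ℝ) * h) :=
          Finset.sum_range_sub (fun j : ℕ => u (t + (j:ℝ) * h)) N
      _ = u (t + (N:ℝ) * h) - u t := by norm_num
  have htel2 : ∀ t ∈ Set.Ici (0:ℝ), ∀ N : ℕ,
      ∑ j ∈ Finset.range N, (u (t + (j:ℝ) * h) - (fun s => u (s + h)) (t + (j:ℝ) * h))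
        = (-u) (t + (N:ℝ) * h) - (-u) t := by
    intro t _ N
    calc ∑ j ∈ Finset.range N, (u (t + (j:ℝ) * h) - (fun s => u (s + h)) (t + (j:ℝ) * h))
        = ∑ j ∈ Finset.range N,
            (u (t + ((j:ℕ):ℝ) * h) - u (t + ((j+1 : ℕ):ℝ) * h)) := by
          refine Finset.sum_congr rfl fun j _ => ?_
          have e : t + (j:ℝ) * h + h = t + ((j+1 : ℕ):ℝ) * h := by push_cast; ring
          show u (t + (j:ℝ) * h) - u (t + (j:ℝ) * h + h) = _
          rw [e]
      _ = u (t + ((0:ℕ):ℝ) * h) - u (t + ((N:ℕ):ℝ) * h) :=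
          Finset.sum_range_sub' (fun j : ℕ => u (t + (j:ℝ) * h)) N
      _ = (-u) (t + (N:ℝ) * h) - (-u) t := by
          simp only [Pi.neg_apply, Nat.cast_zero, zero_mul, add_zero]
          abel
  obtain ⟨T₁, hT₁0, hT₁⟩ := exists_vecMax_small hv1 hu hh hub htel1 hε
  obtain ⟨T₂, hT₂0, hT₂⟩ := exists_vecMax_small hu hv1 hh
    (g := -u) (fun t ht => by simpa using hub t ht) htel2 hε
  simp only [Set.mem_Ici] at hT₁0 hT₂0
  refine ⟨max T₁ T₂, Set.mem_Ici.2 (le_trans hT₁0 (le_max_left _ _)), fun t ht => ?_⟩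
  have ht1 : T₁ ≤ t := (le_max_left _ _).trans ht
  have ht2 : T₂ ≤ t := (le_max_right _ _).trans ht
  have ht0 : (0:ℝ) ≤ t := hT₁0.trans ht1
  have m1 : vecMax (u (t + h) - u t) ≤ ε := by
    have := vecMaxDist_antitone hv1 hu (Set.mem_Ici.2 hT₁0) (Set.mem_Ici.2 ht0) ht1
    simp only at this
    exact this.trans hT₁
  have m2 : vecMax (u t - u (t + h)) ≤ ε := by
    have := vecMaxDist_antitone hu hv1 (Set.mem_Ici.2 hT₂0) (Set.mem_Ici.2 ht0) ht2
    simp only at this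
    exact this.trans hT₂
  refine norm_le_of_vecMax m1 ?_
  rw [neg_sub]
  exact m2

end Aux

theorem ode_sup_norm_nonincreasing_and_converges [Nonempty A]
    (M : MDP S A R) (hcomm : M.Communicating)
    (ybar : S × A → ℝ) (hybar : M.T ybar = ybar + M.rStar • (fun _ => (1 : ℝ)))
    (y : ℝ → (S × A → ℝ))
    (hy : ∀ t ∈ Set.Ici (0 : ℝ),
      HasDerivWithinAt y (M.T (y t) - M.rStar • (fun _ => (1 : ℝ)) - y t) (Set.Ici 0) t) :
    AntitoneOn (fun t => ‖y t - ybar‖) (Set.Ici 0) ∧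
    ∃ ystar : S × A → ℝ, M.T ystar = ystar + M.rStar • (fun _ => (1 : ℝ)) ∧
      Tendsto y atTop (𝓝 ystar) := by
  rcases isEmpty_or_nonempty S with hS | hS
  · have hz : ∀ t, y t - ybar = 0 := fun t => funext fun i => (hS.false i.1).elim
    constructor
    · intro a _ b _ _
      show ‖y b - ybar‖ ≤ ‖y a - ybar‖
      rw [hz a, hz b]
    · refine ⟨ybar, hybar, ?_⟩
      have hz' : y = fun _ => ybar := funext fun t => by
        have := hz t
        rwa [sub_eq_zero] at this
      rw [hz']
      exact tendsto_const_nhds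
  · have hsols : IsSol M M.rStar y := hy
    have hbars : IsSol M M.rStar (fun _ => ybar) := isSol_const hybar
    have hA : AntitoneOn (fun t => ‖y t - ybar‖) (Set.Ici 0) := by
      have := normDist_antitone hsols hbars
      simpa using this
    set B₀ := ‖y 0 - ybar‖ with hB₀
    have hB₀0 : 0 ≤ B₀ := norm_nonneg _
    have hbd : ∀ t ∈ Set.Ici (0:ℝ), ‖y t - ybar‖ ≤ B₀ := fun t ht =>
      hA Set.self_mem_Ici ht (Set.mem_Ici.1 ht)
    have hbdu : ∀ t ∈ Set.Ici (0:ℝ), ‖y t‖ ≤ B₀ + ‖ybar‖ := by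
      intro t ht
      linarith [norm_sub_norm_le (y t) ybar, hbd t ht]
    have hvf0 : vfield M M.rStar ybar = 0 := by rw [vfield, hybar]; abel
    have hvfb : ∀ t ∈ Set.Ici (0:ℝ), ‖vfield M M.rStar (y t)‖ ≤ 2 * B₀ := by
      intro t ht
      have h1 : vfield M M.rStar (y t) = vfield M M.rStar (y t) - vfield M M.rStar ybar := by
        rw [hvf0, sub_zero]
      rw [h1, vfield_sub]
      calc ‖(M.T (y t) - M.T ybar) - (y t - ybar)‖
          ≤ ‖M.T (y t) - M.T ybar‖ + ‖y t - ybar‖ := norm_sub_le _ _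
        _ ≤ ‖y t - ybar‖ + ‖y t - ybar‖ := add_le_add (T_lip M _ _) le_rfl
        _ ≤ 2 * B₀ := by linarith [hbd t ht]
    set C := 2 * B₀ + 1 with hC
    have hCpos : 0 < C := by positivity
    have hF0' : ∀ ε : ℝ, 0 < ε → ∃ T, 0 ≤ T ∧ ∀ t, T ≤ t → ‖vfield M M.rStar (y t)‖ ≤ ε := by
      intro ε hε
      set δ := min (ε / (4 * C)) 1 with hδdef
      have hδpos : 0 < δ := lt_min (by positivity) one_pos
      have hδ1 : δ ≤ ε / (4 * C) := min_le_left _ _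
      have hδC : 2 * C * δ ≤ ε / 2 := by
        have h1 := mul_le_mul_of_nonneg_left hδ1 (by positivity : (0:ℝ) ≤ 2 * C)
        have heq : 2 * C * (ε / (4 * C)) = ε / 2 := by
          field_simp
          ring
        linarith
      obtain ⟨T, hT0, hT⟩ := norm_shift_small hsols hbdu hδpos.le
        (ε := δ * ε / 8) (by positivity)
      refine ⟨T, Set.mem_Ici.1 hT0, fun t ht => ?_⟩
      by_contra hcon
      push_neg at hcon
      have ht0 : (0:ℝ) ≤ t := (Set.mem_Ici.1 hT0).trans ht
      have hex : ∃ i, ε < |vfield M M.rStar (y t) i| := by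
        by_contra hno
        push_neg at hno
        exact absurd ((pi_norm_le_iff_of_nonneg hε.le).2 fun i => by
          simpa [Real.norm_eq_abs] using hno i) (not_le.2 hcon)
      obtain ⟨i, hi⟩ := hex
      have hIccsub : Set.Icc t (t + δ) ⊆ Set.Ici (0:ℝ) := fun x hx =>
        Set.mem_Ici.2 (ht0.trans hx.1)
      have hyL : ∀ s ∈ Set.Icc t (t + δ), ‖y s - y t‖ ≤ C * (s - t) := by
        apply norm_image_sub_le_of_norm_deriv_le_segment'
          (f' := fun x => vfield M M.rStar (y x))
        · intro x hx
          exact (hsols x (hIccsub hx)).mono hIccsub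
        · intro x hx
          exact (hvfb x (hIccsub (Set.Ico_subset_Icc_self hx))).trans (by linarith)
      have hclose : ∀ s ∈ Set.Icc t (t + δ),
          |vfield M M.rStar (y s) i - vfield M M.rStar (y t) i| ≤ ε / 2 := by
        intro s hs
        have h1 : ‖vfield M M.rStar (y s) - vfield M M.rStar (y t)‖ ≤ 2 * ‖y s - y t‖ := by
          rw [vfield_sub]
          calc ‖(M.T (y s) - M.T (y t)) - (y s - y t)‖
              ≤ ‖M.T (y s) - M.T (y t)‖ + ‖y s - y t‖ := norm_sub_le _ _
            _ ≤ 2 * ‖y s - y t‖ := by linarith [T_lip M (y s) (y t)]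
        have h2 : ‖y s - y t‖ ≤ C * δ := (hyL s hs).trans
          (mul_le_mul_of_nonneg_left (by linarith [hs.2]) hCpos.le)
        have h3 : |vfield M M.rStar (y s) i - vfield M M.rStar (y t) i|
            ≤ ‖vfield M M.rStar (y s) - vfield M M.rStar (y t)‖ := by
          simpa [Real.norm_eq_abs] using
            norm_le_pi_norm (vfield M M.rStar (y s) - vfield M M.rStar (y t)) i
        calc |vfield M M.rStar (y s) i - vfield M M.rStar (y t) i|
            ≤ ‖vfield M M.rStar (y s) - vfield M M.rStar (y t)‖ := h3
          _ ≤ 2 * ‖y s - y t‖ := h1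
          _ ≤ 2 * (C * δ) := by linarith
          _ ≤ ε / 2 := by linarith
      have hsmall := hT t ht
      have hcoordsmall : |y (t + δ) i - y t i| ≤ δ * ε / 8 := by
        have h4 : |(y (t + δ) - y t) i| ≤ ‖y (t + δ) - y t‖ := by
          simpa [Real.norm_eq_abs] using norm_le_pi_norm (y (t + δ) - y t) i
        simp only [Pi.sub_apply] at h4
        linarith
      have hccd : ContinuousOn (fun s => y s i) (Set.Icc t (t + δ)) := by
        intro s hs
        exact ((continuous_apply i).continuousAt.comp_continuousWithinAt
          ((hsols s (hIccsub hs)).continuousWithinAt)).mono hIccsub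
      have hdrv : ∀ x ∈ Set.Ioo t (t + δ), HasDerivAt (fun s => y s i)
          (vfield M M.rStar (y x) i) x := by
        intro x hx
        have hx0 : 0 < x := lt_of_le_of_lt ht0 hx.1
        exact hasDerivAt_pi.1
          ((hsols x (Set.mem_Ici.2 hx0.le)).hasDerivAt (Ici_mem_nhds hx0)) i
      rcases lt_abs.1 hi with hP | hP
      · have hlb : ∀ x ∈ Set.Ioo t (t + δ), ε / 2 ≤ vfield M M.rStar (y x) i := by
          intro x hx
          have h5 := (abs_le.1 (hclose x (Set.Ioo_subset_Icc_self hx))).1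
          linarith
        have hg := real_growth hδpos hccd hdrv hlb
        have h6 := (abs_le.1 hcoordsmall).2
        nlinarith [mul_pos hδpos hε]
      · have hub2 : ∀ x ∈ Set.Ioo t (t + δ), vfield M M.rStar (y x) i ≤ -(ε / 2) := by
          intro x hx
          have h5 := (abs_le.1 (hclose x (Set.Ioo_subset_Icc_self hx))).2
          linarith
        have hg := real_decay hδpos hccd hdrv hub2
        have h6 := (abs_le.1 hcoordsmall).1
        nlinarith [mul_pos hδpos hε]
    have hFt : Tendsto (fun t : ℝ => vfield M M.rStar (y t)) atTop (𝓝 0) := by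
      rw [Metric.tendsto_atTop]
      intro ε hε
      obtain ⟨T, hT0, hT⟩ := hF0' (ε / 2) (by positivity)
      exact ⟨T, fun t ht => by
        rw [dist_zero_right]
        exact lt_of_le_of_lt (hT t ht) (by linarith)⟩
    obtain ⟨q, hqmem, φ, hφmono, hφtend⟩ := (isCompact_closedBall ybar B₀).tendsto_subseq
      (x := fun n : ℕ => y n) (fun n => Metric.mem_closedBall.2 (by
        rw [dist_eq_norm]; exact hbd n (Set.mem_Ici.2 (Nat.cast_nonneg n))))
    have hTcont : Continuous (vfield M M.rStar) := by
      have hTlip : LipschitzWith 1 (M.T : (S × A → ℝ) → (S × A → ℝ)) := by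
        apply LipschitzWith.of_dist_le_mul
        intro x x'
        rw [dist_eq_norm, dist_eq_norm, NNReal.coe_one, one_mul]
        exact T_lip M x x'
      show Continuous fun x => M.T x - M.rStar • (fun _ => (1:ℝ)) - x
      exact (hTlip.continuous.sub continuous_const).sub continuous_id
    have hlim1 : Tendsto (fun k => vfield M M.rStar (y ((φ k : ℕ) : ℝ))) atTop
        (𝓝 (vfield M M.rStar q)) := (hTcont.tendsto q).comp hφtend
    have hlim2 : Tendsto (fun k => vfield M M.rStar (y ((φ k : ℕ) : ℝ))) atTop (𝓝 0) :=
      hFt.comp (tendsto_natCast_atTop_atTop.comp hφmono.tendsto_atTop)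
    have hvfq : vfield M M.rStar q = 0 := tendsto_nhds_unique hlim1 hlim2
    have hTq : M.T q = q + M.rStar • (fun _ => (1:ℝ)) := by
      have h1 : M.T q - (M.rStar • (fun _ => (1:ℝ)) + q) = 0 := by
        rw [← sub_sub]
        exact hvfq
      rw [sub_eq_zero.1 h1, add_comm]
    refine ⟨hA, q, hTq, ?_⟩
    have hAq : AntitoneOn (fun t => ‖y t - q‖) (Set.Ici 0) := by
      have := normDist_antitone hsols (isSol_const hTq)
      simpa using this
    rw [Metric.tendsto_atTop]
    intro ε hε
    rw [Metric.tendsto_atTop] at hφtend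
    obtain ⟨k0, hk0⟩ := hφtend ε hε
    refine ⟨((φ k0 : ℕ) : ℝ), fun t ht => ?_⟩
    have h0k : (0:ℝ) ≤ ((φ k0 : ℕ) : ℝ) := Nat.cast_nonneg _
    have hd := hAq (Set.mem_Ici.2 h0k) (Set.mem_Ici.2 (h0k.trans ht)) ht
    simp only at hd
    calc dist (y t) q = ‖y t - q‖ := dist_eq_norm _ _
      _ ≤ ‖y ((φ k0 : ℕ) : ℝ) - q‖ := hd
      _ = dist (((fun n : ℕ => y (n : ℝ)) ∘ φ) k0) q := by
          rw [dist_eq_norm]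
          rfl
      _ < ε := hk0 k0 le_rfl
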